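/- Let I be a (not necessarily directed) nonempty index set, let (E_i)_{i∈I} be normed lattices, and let φ_i: E_i → E be continuous almost interval preserving linear maps into a normed lattice E such that E is the norm closure of ⋃_i φ_i(E_i). Let χ: E → F be a continuous linear map into a normed lattice F. Then χ is almost interval preserving if and only if every composition χ ∘ φ_i: E_i → F is almost interval preserving. -/

import Mathlib

open Set

section aux
variable {G : Type*} [NormedAddCommGroup G] [Lattice G] [HasSolidNorm G] [IsOrderedAddMonoid G]

lemma aux_sub_inf (a b : G) : a - a ⊓ b = (a - b) ⊔ 0 := by
  rw [sub_eq_add_neg, neg_inf, add_sup]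
  simp [sub_eq_add_neg, sup_comm]

lemma aux_norm_le {a b : G} (h0 : 0 ≤ a) (h : a ≤ |b|) : ‖a‖ ≤ ‖b‖ :=
  norm_le_norm_of_abs_le_abs (by rwa [abs_of_nonneg h0])

lemma aux_pos_le_abs (a : G) : (a ⊔ 0) ≤ |a| := sup_le (le_abs_self a) (abs_nonneg a)

end aux

/-- Let `φ_i : E_i → G` be continuous almost interval preserving linear
maps between normed lattices such that `G` is the norm closure of `⋃_i φ_i(E_i)`, and let
`χ : G → F` be a continuous linear map into a normed lattice. Then `χ` is almost interval
preserving iff every `χ ∘ φ_i` is almost interval preserving. -/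
theorem factoring_map_almostIntervalPreserving
    {ι : Type*} [Nonempty ι]
    (E : ι → Type*)
    [∀ i, NormedAddCommGroup (E i)] [∀ i, Lattice (E i)]
      [∀ i, HasSolidNorm (E i)] [∀ i, IsOrderedAddMonoid (E i)] [∀ i, NormedSpace ℝ (E i)]
    {G F : Type*}
    [NormedAddCommGroup G] [Lattice G] [HasSolidNorm G] [IsOrderedAddMonoid G] [NormedSpace ℝ G]
    [NormedAddCommGroup F] [Lattice F] [HasSolidNorm F] [IsOrderedAddMonoid F] [NormedSpace ℝ F]
    (φ : ∀ i, E i →L[ℝ] G)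
    (hφ_pos : ∀ i, ∀ x : E i, 0 ≤ x → 0 ≤ φ i x)
    (hφ_aip : ∀ i, ∀ x : E i, 0 ≤ x → Icc (0 : G) (φ i x) = closure ((φ i) '' Icc 0 x))
    (hdense : closure (⋃ i, Set.range (φ i)) = univ)
    (χ : G →L[ℝ] F) :
    ((∀ g : G, 0 ≤ g → 0 ≤ χ g) ∧
        ∀ g : G, 0 ≤ g → Icc (0 : F) (χ g) = closure (χ '' Icc 0 g)) ↔
      ∀ i, (∀ x : E i, 0 ≤ x → 0 ≤ χ (φ i x)) ∧
        ∀ x : E i, 0 ≤ x →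
          Icc (0 : F) (χ (φ i x)) = closure ((fun e => χ (φ i e)) '' Icc 0 x) := by
  constructor
  · rintro ⟨hpos, haip⟩ i
    refine ⟨fun x hx => hpos _ (hφ_pos i x hx), fun x hx => ?_⟩
    rw [haip _ (hφ_pos i x hx), hφ_aip i x hx, closure_image_closure χ.continuous,
      ← image_comp]
    rfl
  · intro h
    -- approximation of positive elements by images of positive elements
    have approx : ∀ g : G, 0 ≤ g → ∀ δ : ℝ, 0 < δ →
        ∃ i, ∃ z : E i, 0 ≤ z ∧ ‖g - φ i z‖ < δ := by
      intro g hg δ hδ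
      have hmem : g ∈ closure (⋃ i, Set.range (φ i)) := by rw [hdense]; trivial
      obtain ⟨y, hy, hdy⟩ := Metric.mem_closure_iff.1 hmem (δ / 2) (by linarith)
      obtain ⟨i, x, rfl⟩ : ∃ i, ∃ x : E i, φ i x = y := by
        simpa [Set.mem_iUnion, Set.mem_range] using hy
      -- u = g ⊓ φ i |x|
      have hφmono : φ i x ≤ φ i |x| := by
        have := hφ_pos i (|x| - x) (by simp [sub_nonneg, le_abs_self])
        rw [map_sub] at this
        exact sub_nonneg.1 this
      set u : G := g ⊓ φ i |x| with hu
      have hu0 : 0 ≤ u := le_inf hg (hφ_pos i |x| (abs_nonneg x))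
      have hgu : ‖g - u‖ < δ / 2 := by
        have h1 : g - u = (g - φ i |x|) ⊔ 0 := aux_sub_inf g (φ i |x|)
        have h2 : (g - φ i |x|) ⊔ 0 ≤ (g - φ i x) ⊔ 0 :=
          sup_le_sup_right (sub_le_sub_left hφmono g) 0
        have h3 : g - u ≤ |g - φ i x| := h1 ▸ h2.trans (aux_pos_le_abs _)
        have h4 : ‖g - u‖ ≤ ‖g - φ i x‖ :=
          aux_norm_le (by rw [h1]; exact le_sup_right) h3
        calc ‖g - u‖ ≤ ‖g - φ i x‖ := h4
          _ < δ / 2 := by rwa [dist_eq_norm] at hdy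
      have humem : u ∈ closure ((φ i) '' Icc 0 |x|) := by
        rw [← hφ_aip i |x| (abs_nonneg x)]
        exact ⟨hu0, inf_le_right⟩
      obtain ⟨b, hb, hdb⟩ := Metric.mem_closure_iff.1 humem (δ / 2) (by linarith)
      obtain ⟨z, hz, rfl⟩ := hb
      refine ⟨i, z, hz.1, ?_⟩
      have : ‖g - φ i z‖ ≤ ‖g - u‖ + ‖u - φ i z‖ := by
        simpa using norm_add_le (g - u) (u - φ i z)
      rw [dist_eq_norm] at hdb
      linarith
    -- positivity of χ
    have hχpos : ∀ g : G, 0 ≤ g → 0 ≤ χ g := by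
      intro g hg
      have hcl : IsClosed {f : F | 0 ≤ f} := isClosed_le continuous_const continuous_id
      have : χ g ∈ closure {f : F | 0 ≤ f} := by
        rw [Metric.mem_closure_iff]
        intro ε hε
        have hC : (0:ℝ) < ‖χ‖ + 1 := by positivity
        obtain ⟨i, z, hz0, hgz⟩ := approx g hg (ε / (‖χ‖ + 1)) (by positivity)
        set u : G := g ⊓ φ i z with hu
        have hu0 : 0 ≤ u := le_inf hg (hφ_pos i z hz0)
        -- χ u ≥ 0
        have humem : u ∈ closure ((φ i) '' Icc 0 z) := by
          rw [← hφ_aip i z hz0]; exact ⟨hu0, inf_le_right⟩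
        have hχu : χ u ∈ closure {f : F | 0 ≤ f} := by
          have h1 : χ u ∈ closure (χ '' ((φ i) '' Icc 0 z)) :=
            image_closure_subset_closure_image χ.continuous (mem_image_of_mem _ humem)
          refine closure_mono ?_ h1
          rintro _ ⟨_, ⟨w, hw, rfl⟩, rfl⟩
          exact (h i).1 w hw.1
        rw [hcl.closure_eq] at hχu
        refine ⟨χ u, hχu, ?_⟩
        have h1 : g - u = (g - φ i z) ⊔ 0 := aux_sub_inf g (φ i z)
        have h2 : ‖g - u‖ ≤ ‖g - φ i z‖ :=
          aux_norm_le (by rw [h1]; exact le_sup_right)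
            (h1 ▸ aux_pos_le_abs _)
        have h3 : ‖χ g - χ u‖ ≤ ‖χ‖ * ‖g - u‖ := by
          rw [← map_sub]; exact χ.le_opNorm _
        rw [dist_eq_norm]
        have h4 : ‖χ‖ * ‖g - u‖ ≤ ‖χ‖ * (ε / (‖χ‖ + 1)) := by
          apply mul_le_mul_of_nonneg_left (h2.trans hgz.le) (norm_nonneg _)
        have h5 : ‖χ‖ * (ε / (‖χ‖ + 1)) < ε := by
          rw [mul_div_assoc'] at *
          rw [div_lt_iff₀ hC]
          nlinarith [norm_nonneg χ]
        linarith
      rwa [hcl.closure_eq] at this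
    refine ⟨hχpos, fun g hg => ?_⟩
    apply Subset.antisymm
    · -- hard direction
      intro f hf
      rw [Metric.mem_closure_iff]
      intro ε hε
      have hC : (0:ℝ) < ‖χ‖ + 1 := by positivity
      set δ : ℝ := ε / (2 * (‖χ‖ + 1)) with hδdef
      have hδ : 0 < δ := by positivity
      obtain ⟨i, z, hz0, hgz⟩ := approx g hg δ hδ
      set f' : F := f ⊓ χ (φ i z) with hf'def
      have hf'0 : 0 ≤ f' := le_inf hf.1 ((h i).1 z hz0)
      -- ‖f - f'‖ ≤ ‖χ‖ * δ
      have hff' : ‖f - f'‖ ≤ ‖χ‖ * δ := by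
        have h1 : f - f' = (f - χ (φ i z)) ⊔ 0 := aux_sub_inf f (χ (φ i z))
        have h2 : (f - χ (φ i z)) ⊔ 0 ≤ (χ g - χ (φ i z)) ⊔ 0 :=
          sup_le_sup_right (sub_le_sub_right hf.2 _) 0
        have h3 : f - f' ≤ |χ (g - φ i z)| := by
          rw [h1, map_sub]; exact h2.trans (aux_pos_le_abs _)
        have h4 : ‖f - f'‖ ≤ ‖χ (g - φ i z)‖ :=
          aux_norm_le (by rw [h1]; exact le_sup_right) h3
        calc ‖f - f'‖ ≤ ‖χ (g - φ i z)‖ := h4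
          _ ≤ ‖χ‖ * ‖g - φ i z‖ := χ.le_opNorm _
          _ ≤ ‖χ‖ * δ := mul_le_mul_of_nonneg_left hgz.le (norm_nonneg _)
      -- f' ∈ closure ((χ ∘ φ i) '' Icc 0 z)
      have hf'mem : f' ∈ closure ((fun e => χ (φ i e)) '' Icc 0 z) := by
        rw [← (h i).2 z hz0]; exact ⟨hf'0, inf_le_right⟩
      obtain ⟨b, hb, hdb⟩ := Metric.mem_closure_iff.1 hf'mem δ hδ
      obtain ⟨w, hw, rfl⟩ := hb
      -- v := φ i w ⊓ g
      set v : G := φ i w ⊓ g with hvdef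
      have hv : v ∈ Icc (0:G) g := ⟨le_inf (hφ_pos i w hw.1) hg, inf_le_right⟩
      have hφw : φ i w ≤ φ i z := by
        have := hφ_pos i (z - w) (sub_nonneg.2 hw.2)
        rw [map_sub] at this
        exact sub_nonneg.1 this
      have hwv : ‖φ i w - v‖ ≤ δ := by
        have h1 : φ i w - v = (φ i w - g) ⊔ 0 := aux_sub_inf (φ i w) g
        have h2 : (φ i w - g) ⊔ 0 ≤ (φ i z - g) ⊔ 0 :=
          sup_le_sup_right (sub_le_sub_right hφw g) 0
        have h3 : φ i w - v ≤ |φ i z - g| := h1 ▸ h2.trans (aux_pos_le_abs _)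
        have h4 : ‖φ i w - v‖ ≤ ‖φ i z - g‖ :=
          aux_norm_le (by rw [h1]; exact le_sup_right) h3
        refine h4.trans ?_
        rw [norm_sub_rev]
        exact hgz.le
      have hχwv : ‖χ (φ i w) - χ v‖ ≤ ‖χ‖ * δ := by
        rw [← map_sub]
        calc ‖χ (φ i w - v)‖ ≤ ‖χ‖ * ‖φ i w - v‖ := χ.le_opNorm _
          _ ≤ ‖χ‖ * δ := mul_le_mul_of_nonneg_left hwv (norm_nonneg _)
      refine ⟨χ v, mem_image_of_mem _ hv, ?_⟩
      rw [dist_eq_norm]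
      have t1 : ‖f - χ v‖ ≤ ‖f - f'‖ + ‖f' - χ v‖ :=
        norm_sub_le_norm_sub_add_norm_sub f f' (χ v)
      have t2 : ‖f' - χ v‖ ≤ ‖f' - χ (φ i w)‖ + ‖χ (φ i w) - χ v‖ :=
        norm_sub_le_norm_sub_add_norm_sub f' (χ (φ i w)) (χ v)
      rw [dist_eq_norm] at hdb
      have hfinal : (2 * ‖χ‖ + 1) * δ < 2 * (‖χ‖ + 1) * δ := by nlinarith [norm_nonneg χ]
      have : 2 * (‖χ‖ + 1) * δ = ε := by
        rw [hδdef]; field_simp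
      linarith
    · apply closure_minimal ?_ isClosed_Icc
      rintro _ ⟨v, ⟨hv0, hvg⟩, rfl⟩
      refine ⟨hχpos v hv0, ?_⟩
      have := hχpos (g - v) (sub_nonneg.2 hvg)
      rw [map_sub] at this
      exact sub_nonneg.1 this
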